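/- For each subdiagonal word d of length n, El(d) = {1,2,…,n−1} ∖ Eul(δ(r(d))). -/

import Mathlib

/-- Descent set (ligne of route) of a word, with 1-based positions. -/
def ligne (w : List ℕ) : Finset ℕ :=
  (Finset.Icc 1 (w.length - 1)).filter (fun i => w.getD (i-1) 0 > w.getD i 0)

/-- Major index of a word. -/
def maj (w : List ℕ) : ℕ := ∑ i ∈ ligne w, i

/-- Inversion number of a word. -/
def inv (w : List ℕ) : ℕ :=
  ((Finset.range w.length ×ˢ Finset.range w.length).filter
    (fun p => p.1 < p.2 ∧ w.getD p.1 0 > w.getD p.2 0)).card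

/-- `w` is (the one-line word of) a permutation of `1,…,n`. -/
def IsPermWord (n : ℕ) (w : List ℕ) : Prop := w.Perm (List.range' 1 n)

/-- One-line word of `σ ∈ S_n` with values in `1,…,n`. -/
def toWord {n : ℕ} (σ : Equiv.Perm (Fin n)) : List ℕ := List.ofFn (fun i => (σ i : ℕ) + 1)

/-- Subexcedent word: `0 ≤ d_i ≤ i-1` (1-based), i.e. `d_i ≤ i` for 0-based `i`. -/
def Subexcedent (w : List ℕ) : Prop := ∀ i < w.length, w.getD i 0 ≤ i

/-- Subdiagonal word: `0 ≤ d_i ≤ n-i` (1-based). -/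
def Subdiagonal (w : List ℕ) : Prop := ∀ i < w.length, w.getD i 0 + i + 1 ≤ w.length

/-- Lehmer code: `d_i = #{j < i : x_j > x_i}`. -/
def invcode (w : List ℕ) : List ℕ :=
  (List.range w.length).map (fun i => ((Finset.range i).filter (fun j => w.getD j 0 > w.getD i 0)).card)

/-- `Lc`-code: `d_i = #{j > i : x_i > x_j}`. -/
def lc (w : List ℕ) : List ℕ :=
  (List.range w.length).map (fun i => ((Finset.Ico (i+1) w.length).filter (fun j => w.getD i 0 > w.getD j 0)).card)

/-- Major index code: `d_i = maj(σ|_i) - maj(σ|_{i-1})`, where `σ|_i` erases letters `> i`. -/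
def majcode (w : List ℕ) : List ℕ :=
  (List.range w.length).map (fun i => maj (w.filter (· ≤ i+1)) - maj (w.filter (· ≤ i)))

/-- `Mc`-code: `d_i = maj(σ^{(i)}) - maj(σ^{(i+1)})`, where `σ^{(i)}` erases letters `< i`. -/
def mc (w : List ℕ) : List ℕ :=
  (List.range w.length).map (fun i => maj (w.filter (fun x => i+1 ≤ x)) - maj (w.filter (fun x => i+2 ≤ x)))

/-- One-line word of the inverse permutation. -/
def invWord (w : List ℕ) : List ℕ :=
  (List.range w.length).map (fun i => w.idxOf (i+1) + 1)

/-- `Ic σ = Lc (σ⁻¹)`. -/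
def ic (w : List ℕ) : List ℕ := lc (invWord w)

/-- Inverse ligne of route. -/
def iligne (w : List ℕ) : Finset ℕ := ligne (invWord w)

/-- Complement map `δ` on codes: `δ(d₁⋯d_n) = (0-d₁)(1-d₂)⋯(n-1-d_n)`. -/
def deltaC (w : List ℕ) : List ℕ :=
  (List.range w.length).map (fun i => i - w.getD i 0)

/-- Nondecreasing rearrangement of a word. -/
def sortW (w : List ℕ) : List ℕ := List.insertionSort (· ≤ ·) w

/-- Set-valued statistic `El = Ligne ∘ Mc⁻¹` on subdiagonal words. -/
noncomputable def El (d : List ℕ) : Finset ℕ := by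
  classical
  exact if h : ∃ w, IsPermWord d.length w ∧ mc w = d then ligne h.choose else ∅

/-- Set-valued statistic `Eul = Ligne ∘ Majcode⁻¹` on subexcedent words. -/
noncomputable def Eul (d : List ℕ) : Finset ℕ := by
  classical
  exact if h : ∃ w, IsPermWord d.length w ∧ majcode w = d then ligne h.choose else ∅

def insW (u : List ℕ) (p M : ℕ) : List ℕ := u.take p ++ M :: u.drop p

lemma insW_length (u : List ℕ) {p : ℕ} (hp : p ≤ u.length) (M : ℕ) :
    (insW u p M).length = u.length + 1 := by
  simp [insW]; omega

lemma insW_getD_lt (u : List ℕ) {p i : ℕ} (hp : p ≤ u.length) (hi : i < p) (M : ℕ) :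
    (insW u p M).getD i 0 = u.getD i 0 := by
  rw [insW, List.getD_append _ _ _ _ (by simp; omega)]
  rcases lt_or_ge i u.length with h | h
  · rw [List.getD_eq_getElem _ _ (by simp; omega), List.getD_eq_getElem _ _ h]
    simp [List.getElem_take]
  · omega

lemma insW_getD_eq (u : List ℕ) {p : ℕ} (hp : p ≤ u.length) (M : ℕ) :
    (insW u p M).getD p 0 = M := by
  rw [insW, List.getD_eq_getElem _ _ (by simp; omega)]
  rw [List.getElem_append_right (by simp)]
  simp [Nat.min_eq_left hp]

lemma insW_getD_gt (u : List ℕ) {p i : ℕ} (hp : p ≤ u.length) (hi : p < i) (M : ℕ) :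
    (insW u p M).getD i 0 = u.getD (i-1) 0 := by
  rcases lt_or_ge (i-1) u.length with h | h
  · rw [insW, List.getD_eq_getElem _ _ (by simp; omega), List.getD_eq_getElem _ _ h]
    rw [List.getElem_append_right (by simp; omega)]
    simp only [List.length_take, Nat.min_eq_left hp]
    rw [List.getElem_cons]
    rw [dif_neg (by omega)]
    rw [List.getElem_drop]
    congr 1; omega
  · rw [List.getD_eq_default _ _ (by simp [insW]; omega), List.getD_eq_default _ _ (by omega)]

lemma mem_ligne {w : List ℕ} {i : ℕ} :
    i ∈ ligne w ↔ 1 ≤ i ∧ i ≤ w.length - 1 ∧ w.getD (i-1) 0 > w.getD i 0 := by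
  simp [ligne, Finset.mem_filter, Finset.mem_Icc, and_assoc]

lemma ligne_subset (w : List ℕ) : ligne w ⊆ Finset.Icc 1 (w.length - 1) :=
  Finset.filter_subset _ _

lemma getD_lt_of_forall {u : List ℕ} {M : ℕ} (hM : ∀ x ∈ u, x < M) {i : ℕ}
    (hi : i < u.length) : u.getD i 0 < M := by
  rw [List.getD_eq_getElem _ _ hi]; exact hM _ (u.getElem_mem hi)

lemma ligne_insW {u : List ℕ} {p M : ℕ} (hp : p ≤ u.length) (hM : ∀ x ∈ u, x < M) :
    ligne (insW u p M) =
      ((ligne u).filter (· < p) ∪ ((ligne u).filter (fun j => p < j)).image (· + 1))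
        ∪ (if p < u.length then {p+1} else ∅) := by
  have hlen := insW_length u hp M
  have key : ∀ i, i ∈ ligne (insW u p M) ↔
      1 ≤ i ∧ i ≤ u.length ∧ (insW u p M).getD (i-1) 0 > (insW u p M).getD i 0 := by
    intro i
    rw [mem_ligne, hlen]
    rw [Nat.add_sub_cancel]
  ext i
  rw [key]
  simp only [Finset.mem_union, Finset.mem_filter, Finset.mem_image, mem_ligne]
  constructor
  · rintro ⟨h1, h2, h3⟩
    rcases lt_trichotomy i p with hip | hip | hip
    · left; left
      rw [insW_getD_lt u hp (by omega) M, insW_getD_lt u hp hip M] at h3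
      exact ⟨⟨h1, by omega, h3⟩, hip⟩
    · exfalso
      subst hip
      rw [insW_getD_eq u hp M] at h3
      rw [insW_getD_lt u hp (by omega) M] at h3
      exact absurd h3 (not_lt.mpr (le_of_lt (getD_lt_of_forall hM (by omega))))
    · rcases eq_or_lt_of_le (show p + 1 ≤ i by omega) with hip1 | hip1
      · right; rw [if_pos (by omega)]; simp [← hip1]
      · left; right
        refine ⟨i - 1, ⟨⟨by omega, by omega, ?_⟩, by omega⟩, by omega⟩
        rw [insW_getD_gt u hp (by omega) M, insW_getD_gt u hp (by omega) M] at h3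
        exact h3
  · rintro ((⟨⟨h1, h2, h3⟩, h4⟩ | ⟨j, ⟨⟨h1, h2, h3⟩, h4⟩, h5⟩) | h)
    · refine ⟨h1, by omega, ?_⟩
      rw [insW_getD_lt u hp (by omega) M, insW_getD_lt u hp h4 M]
      exact h3
    · subst h5
      refine ⟨by omega, by omega, ?_⟩
      rw [insW_getD_gt u hp (by omega) M, insW_getD_gt u hp (by omega) M]
      have e1 : j + 1 - 1 - 1 = j - 1 := by omega
      have e2 : j + 1 - 1 = j := by omega
      rw [e1, e2]
      exact h3
    · rcases lt_or_ge p u.length with hpn | hpn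
      · rw [if_pos hpn] at h
        simp only [Finset.mem_singleton] at h
        subst h
        refine ⟨by omega, by omega, ?_⟩
        have e2 : p + 1 - 1 = p := by omega
        rw [e2, insW_getD_eq u hp M, insW_getD_gt u hp (by omega) M, e2]
        exact getD_lt_of_forall hM hpn
      · rw [if_neg (by omega)] at h; simp at h

lemma maj_split (u : List ℕ) (p : ℕ) :
    maj u = ∑ j ∈ (ligne u).filter (· < p), j + ∑ j ∈ (ligne u).filter (fun j => p < j), j
      + (if p ∈ ligne u then p else 0) := by
  classical
  rw [maj, ← Finset.sum_filter_add_sum_filter_not (ligne u) (· < p)]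
  have h1 : (ligne u).filter (fun j => ¬ j < p)
      = (ligne u).filter (fun j => p < j) ∪ (ligne u).filter (fun j => j = p) := by
    ext j; simp only [Finset.mem_filter, Finset.mem_union]; constructor
    · rintro ⟨h, h2⟩; rcases eq_or_lt_of_le (not_lt.mp h2) with h3|h3
      · right; exact ⟨h, h3.symm⟩
      · left; exact ⟨h, h3⟩
    · rintro (⟨h, h2⟩|⟨h, h2⟩) <;> exact ⟨h, by omega⟩
  have h2 : Disjoint ((ligne u).filter (fun j => p < j)) ((ligne u).filter (fun j => j = p)) := by
    rw [Finset.disjoint_left]; intro a ha hb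
    simp only [Finset.mem_filter] at ha hb; omega
  rw [h1, Finset.sum_union h2]
  have h3 : ∑ j ∈ (ligne u).filter (fun j => j = p), j = if p ∈ ligne u then p else 0 := by
    by_cases hp : p ∈ ligne u
    · rw [if_pos hp]
      have : (ligne u).filter (fun j => j = p) = {p} := by
        ext j; simp only [Finset.mem_filter, Finset.mem_singleton]
        exact ⟨fun h => h.2, fun h => ⟨h ▸ hp, h⟩⟩
      rw [this, Finset.sum_singleton]
    · rw [if_neg hp]
      have : (ligne u).filter (fun j => j = p) = ∅ := by
        ext j; simp only [Finset.mem_filter, Finset.notMem_empty, iff_false]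
        rintro ⟨h, rfl⟩; exact hp h
      rw [this, Finset.sum_empty]
  omega

lemma maj_insW_eq {u : List ℕ} {p M : ℕ} (hp : p ≤ u.length) (hM : ∀ x ∈ u, x < M) :
    maj (insW u p M) + (if p ∈ ligne u then p else 0)
      = maj u + ((ligne u).filter (fun j => p < j)).card
        + (if p < u.length then p + 1 else 0) := by
  classical
  have hd1 : Disjoint ((ligne u).filter (· < p))
      (((ligne u).filter (fun j => p < j)).image (· + 1)) := by
    rw [Finset.disjoint_left]; intro a ha hb
    simp only [Finset.mem_filter, Finset.mem_image] at ha hb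
    obtain ⟨j, hj, rfl⟩ := hb; omega
  have hd2 : Disjoint ((ligne u).filter (· < p) ∪ ((ligne u).filter (fun j => p < j)).image (· + 1))
      (if p < u.length then ({p+1} : Finset ℕ) else ∅) := by
    rw [Finset.disjoint_left]; intro a ha hb
    split_ifs at hb with h
    · simp only [Finset.mem_singleton] at hb
      subst hb
      simp only [Finset.mem_union, Finset.mem_filter, Finset.mem_image] at ha
      rcases ha with h1 | ⟨j, hj, hje⟩
      · omega
      · omega
    · simp at hb
  rw [show maj (insW u p M) = ∑ i ∈ ligne (insW u p M), i from rfl, ligne_insW hp hM,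
    Finset.sum_union hd2, Finset.sum_union hd1,
    Finset.sum_image (by intro a _ b _ h; beta_reduce at h; omega)]
  have h4 : ∑ j ∈ (ligne u).filter (fun j => p < j), (j + 1)
      = ∑ j ∈ (ligne u).filter (fun j => p < j), j
        + ((ligne u).filter (fun j => p < j)).card := by
    rw [Finset.sum_add_distrib, Finset.sum_const, smul_eq_mul, mul_one]
  have h5 : ∑ i ∈ (if p < u.length then ({p+1} : Finset ℕ) else ∅), i
      = if p < u.length then p + 1 else 0 := by
    split_ifs <;> simp
  have h6 := maj_split u p
  omega

lemma ligne_mem_bounds {u : List ℕ} {j : ℕ} (h : j ∈ ligne u) : 1 ≤ j ∧ j ≤ u.length - 1 :=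
  ⟨(mem_ligne.mp h).1, (mem_ligne.mp h).2.1⟩

lemma card_filter_gt {u : List ℕ} (p : ℕ) :
    ((ligne u).filter (fun j => p < j)).card ≤ u.length - 1 - p := by
  have : (ligne u).filter (fun j => p < j) ⊆ Finset.Icc (p+1) (u.length - 1) := by
    intro j hj
    simp only [Finset.mem_filter] at hj
    have := ligne_mem_bounds hj.1
    simp only [Finset.mem_Icc]; omega
  calc ((ligne u).filter (fun j => p < j)).card ≤ (Finset.Icc (p+1) (u.length-1)).card :=
        Finset.card_le_card this
    _ = u.length - 1 - p := by rw [Nat.card_Icc]; omega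

lemma maj_le_maj_insW {u : List ℕ} {p M : ℕ} (hp : p ≤ u.length) (hM : ∀ x ∈ u, x < M) :
    maj u ≤ maj (insW u p M) := by
  have h := maj_insW_eq hp hM
  by_cases hD : p ∈ ligne u
  · have hb := ligne_mem_bounds hD
    rw [if_pos hD, if_pos (by omega)] at h
    omega
  · rw [if_neg hD] at h; omega

lemma maj_insW_le {u : List ℕ} {p M : ℕ} (hp : p ≤ u.length) (hM : ∀ x ∈ u, x < M) :
    maj (insW u p M) ≤ maj u + u.length := by
  have h := maj_insW_eq hp hM
  have hc := card_filter_gt (u := u) p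
  by_cases hn : p < u.length
  · rw [if_pos hn] at h
    by_cases hD : p ∈ ligne u
    · rw [if_pos hD] at h; omega
    · rw [if_neg hD] at h; omega
  · rw [if_neg hn] at h
    rw [if_neg (by by_contra hD; have := ligne_mem_bounds hD; omega)] at h
    omega

lemma maj_insW_ne {u : List ℕ} {p q M : ℕ} (hpq : p < q) (hq : q ≤ u.length)
    (hM : ∀ x ∈ u, x < M) : maj (insW u p M) ≠ maj (insW u q M) := by
  classical
  intro heq
  have Ep := maj_insW_eq (le_trans (le_of_lt hpq) hq) hM
  have Eq := maj_insW_eq hq hM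
  set D := ligne u with hD
  -- split counting
  have hsplit : D.filter (fun j => p < j)
      = D.filter (fun j => p < j ∧ j ≤ q) ∪ D.filter (fun j => q < j) := by
    ext j; simp only [Finset.mem_filter, Finset.mem_union]
    by_cases h : j ∈ D <;> simp [h] <;> omega
  have hdisj : Disjoint (D.filter (fun j => p < j ∧ j ≤ q)) (D.filter (fun j => q < j)) := by
    rw [Finset.disjoint_left]; intro a ha hb
    simp only [Finset.mem_filter] at ha hb; omega
  have hcard : (D.filter (fun j => p < j)).card
      = (D.filter (fun j => p < j ∧ j ≤ q)).card + (D.filter (fun j => q < j)).card := by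
    rw [hsplit, Finset.card_union_of_disjoint hdisj]
  set B := (D.filter (fun j => p < j ∧ j ≤ q)).card with hB
  have hB1 : q ∈ D → 1 ≤ B := by
    intro hqD
    have : q ∈ D.filter (fun j => p < j ∧ j ≤ q) := by
      simp only [Finset.mem_filter]; exact ⟨hqD, hpq, le_refl q⟩
    exact Finset.card_pos.mpr ⟨q, this⟩
  have hB2 : q ∉ D → B ≤ q - p - 1 := by
    intro hqD
    have hsub : D.filter (fun j => p < j ∧ j ≤ q) ⊆ Finset.Icc (p+1) (q-1) := by
      intro j hj
      simp only [Finset.mem_filter] at hj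
      have : j ≠ q := by rintro rfl; exact hqD hj.1
      simp only [Finset.mem_Icc]; omega
    calc B ≤ (Finset.Icc (p+1) (q-1)).card := Finset.card_le_card hsub
      _ ≤ q - p - 1 := by rw [Nat.card_Icc]; omega
  rw [heq] at Ep
  by_cases hqD : q ∈ D
  · have hbq := ligne_mem_bounds hqD
    have h1 := hB1 hqD
    rw [if_pos hqD, if_pos (by omega)] at Eq
    by_cases hpD : p ∈ D
    · rw [if_pos hpD, if_pos (by omega)] at Ep; omega
    · rw [if_neg hpD, if_pos (by omega)] at Ep; omega
  · have h2 := hB2 hqD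
    rw [if_neg hqD] at Eq
    by_cases hqn : q < u.length
    · rw [if_pos hqn] at Eq
      by_cases hpD : p ∈ D
      · have hbp := ligne_mem_bounds hpD
        rw [if_pos hpD, if_pos (by omega)] at Ep; omega
      · rw [if_neg hpD, if_pos (by omega)] at Ep; omega
    · rw [if_neg hqn] at Eq
      by_cases hpD : p ∈ D
      · have hbp := ligne_mem_bounds hpD
        rw [if_pos hpD, if_pos (by omega)] at Ep; omega
      · rw [if_neg hpD, if_pos (by omega)] at Ep; omega

lemma maj_insW_surj {u : List ℕ} {M : ℕ} (hM : ∀ x ∈ u, x < M) {k : ℕ} (hk : k ≤ u.length) :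
    ∃ p ≤ u.length, maj (insW u p M) = maj u + k := by
  classical
  set n := u.length with hn
  set S := (Finset.range (n+1)).image (fun p => maj (insW u p M)) with hS
  have hinj : Set.InjOn (fun p => maj (insW u p M)) (Finset.range (n+1)) := by
    intro a ha b hb hab
    simp only [Finset.coe_range, Set.mem_Iio] at ha hb
    rcases lt_trichotomy a b with h | h | h
    · exact absurd hab (maj_insW_ne h (by omega) hM)
    · exact h
    · exact absurd hab.symm (maj_insW_ne h (by omega) hM)
  have hcard : S.card = n + 1 := by
    rw [hS, Finset.card_image_of_injOn hinj, Finset.card_range]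
  have hsub : S ⊆ Finset.Icc (maj u) (maj u + n) := by
    intro x hx
    simp only [hS, Finset.mem_image, Finset.mem_range] at hx
    obtain ⟨p, hp, rfl⟩ := hx
    simp only [Finset.mem_Icc]
    exact ⟨maj_le_maj_insW (by omega) hM, maj_insW_le (by omega) hM⟩
  have heq : S = Finset.Icc (maj u) (maj u + n) := by
    apply Finset.eq_of_subset_of_card_le hsub
    rw [Nat.card_Icc, hcard]; omega
  have : maj u + k ∈ S := by
    rw [heq]; simp only [Finset.mem_Icc]; omega
  simp only [hS, Finset.mem_image, Finset.mem_range] at this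
  obtain ⟨p, hp, hpe⟩ := this
  exact ⟨p, by omega, hpe⟩

lemma IsPermWord.length {n : ℕ} {w : List ℕ} (h : IsPermWord n w) : w.length = n := by
  rw [h.length_eq, List.length_range']

lemma IsPermWord.mem_iff {n : ℕ} {w : List ℕ} (h : IsPermWord n w) {x : ℕ} :
    x ∈ w ↔ 1 ≤ x ∧ x ≤ n := by
  rw [List.Perm.mem_iff h, List.mem_range'_1]; omega

lemma IsPermWord.nodup {n : ℕ} {w : List ℕ} (h : IsPermWord n w) : w.Nodup :=
  h.nodup_iff.mpr (List.nodup_range' ..)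

lemma range'_filter_le {n k : ℕ} (hk : k ≤ n) :
    (List.range' 1 n).filter (· ≤ k) = List.range' 1 k := by
  have hsplit : List.range' 1 k ++ List.range' (1 + k) (n - k) = List.range' 1 n := by
    have h2 := List.range'_append (s := 1) (m := k) (n := n-k) (step := 1)
    rw [one_mul] at h2
    rw [h2]; congr 1; omega
  rw [← hsplit, List.filter_append]
  rw [List.filter_eq_self.mpr (by intro a ha; rw [List.mem_range'_1] at ha; simp; omega),
    List.filter_eq_nil_iff.mpr (by intro a ha; rw [List.mem_range'_1] at ha; simp; omega),
    List.append_nil]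

lemma IsPermWord.filter_le {n : ℕ} {w : List ℕ} (h : IsPermWord n w) {k : ℕ} (hk : k ≤ n) :
    IsPermWord k (w.filter (· ≤ k)) := by
  have := h.filter (· ≤ k)
  rwa [range'_filter_le hk] at this

lemma IsPermWord.filter_all {n : ℕ} {w : List ℕ} (h : IsPermWord n w) {k : ℕ} (hk : n ≤ k) :
    w.filter (· ≤ k) = w := by
  apply List.filter_eq_self.mpr
  intro a ha
  have := (h.mem_iff).mp ha
  simp; omega

lemma IsPermWord.count_eq_one {n : ℕ} {w : List ℕ} (h : IsPermWord n w) {x : ℕ}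
    (h1 : 1 ≤ x) (h2 : x ≤ n) : w.count x = 1 :=
  List.count_eq_one_of_mem h.nodup (h.mem_iff.mpr ⟨h1, h2⟩)

/-- The key structural lemma: filtering at level `k+1` inserts the letter `k+1`
somewhere into the filtering at level `k`. -/
lemma filter_succ_insW {w : List ℕ} {k : ℕ} (h : w.count (k+1) = 1) :
    ∃ p ≤ (w.filter (· ≤ k)).length,
      w.filter (· ≤ k+1) = insW (w.filter (· ≤ k)) p (k+1) := by
  induction w with
  | nil => simp at h
  | cons a w ih =>
    rcases eq_or_ne a (k+1) with rfl | ha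
    · rw [List.count_cons_self] at h
      have h0 : (k+1) ∉ w := List.count_eq_zero.mp (by omega)
      refine ⟨0, by omega, ?_⟩
      rw [List.filter_cons_of_pos (by simp), List.filter_cons_of_neg (by simp)]
      rw [insW, List.take_zero, List.drop_zero, List.nil_append]
      congr 1
      apply List.filter_congr
      intro x hx
      have : x ≠ k + 1 := fun hc => h0 (hc ▸ hx)
      simp; omega
    · rw [List.count_cons_of_ne ha] at h
      obtain ⟨p, hp, he⟩ := ih h
      rcases le_or_gt a k with hak | hak
      · refine ⟨p + 1, ?_, ?_⟩
        · rw [List.filter_cons_of_pos (by simp; omega)]; simp; omega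
        · rw [List.filter_cons_of_pos (by simp; omega),
            List.filter_cons_of_pos (by simp; omega), he]
          simp [insW, List.take_succ_cons, List.drop_succ_cons]
      · have hak1 : ¬ (a ≤ k + 1) := by omega
        refine ⟨p, ?_, ?_⟩
        · rw [List.filter_cons_of_neg (by simp; omega)]; exact hp
        · rw [List.filter_cons_of_neg (by simpa using hak1),
            List.filter_cons_of_neg (by simp; omega)]
          exact he

lemma filter_le_lt {w : List ℕ} {k : ℕ} : ∀ x ∈ w.filter (· ≤ k), x < k + 1 := by
  intro x hx
  rw [List.mem_filter] at hx
  have := hx.2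
  simp at this; omega

lemma filter_le_zero {n : ℕ} {w : List ℕ} (h : IsPermWord n w) : w.filter (· ≤ 0) = [] := by
  apply List.filter_eq_nil_iff.mpr
  intro a ha
  have := h.mem_iff.mp ha
  simp; omega

lemma chain_insW {n : ℕ} {w : List ℕ} (h : IsPermWord n w) {k : ℕ} (hk : k < n) :
    ∃ p ≤ k, w.filter (· ≤ k+1) = insW (w.filter (· ≤ k)) p (k+1) := by
  obtain ⟨p, hp, he⟩ := filter_succ_insW (h.count_eq_one (x := k+1) (by omega) (by omega))
  rw [(h.filter_le (by omega : k ≤ n)).length] at hp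
  exact ⟨p, hp, he⟩

lemma maj_chain_bounds {n : ℕ} {w : List ℕ} (h : IsPermWord n w) {k : ℕ} (hk : k < n) :
    maj (w.filter (· ≤ k)) ≤ maj (w.filter (· ≤ k+1)) ∧
      maj (w.filter (· ≤ k+1)) ≤ maj (w.filter (· ≤ k)) + k := by
  obtain ⟨p, hp, he⟩ := chain_insW h hk
  have hlen := (h.filter_le (by omega : k ≤ n)).length
  have hple : p ≤ (w.filter (· ≤ k)).length := by omega
  constructor
  · rw [he]; exact maj_le_maj_insW hple filter_le_lt
  · rw [he]
    calc maj (insW (w.filter (· ≤ k)) p (k+1)) ≤ maj (w.filter (· ≤ k)) + (w.filter (· ≤ k)).length :=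
          maj_insW_le hple filter_le_lt
      _ = maj (w.filter (· ≤ k)) + k := by rw [hlen]

lemma majcode_length (w : List ℕ) : (majcode w).length = w.length := by
  simp [majcode]

lemma majcode_getD {w : List ℕ} {i : ℕ} (hi : i < w.length) :
    (majcode w).getD i 0 = maj (w.filter (· ≤ i+1)) - maj (w.filter (· ≤ i)) := by
  rw [List.getD_eq_getElem _ _ (by rw [majcode_length]; exact hi)]
  simp [majcode]

lemma majcode_subexcedent {n : ℕ} {w : List ℕ} (h : IsPermWord n w) :
    Subexcedent (majcode w) := by
  intro i hi
  rw [majcode_length] at hi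
  rw [majcode_getD hi]
  have := maj_chain_bounds h (show i < n by rw [← h.length]; exact hi)
  omega

lemma majcode_inj {n : ℕ} {w w' : List ℕ} (hw : IsPermWord n w) (hw' : IsPermWord n w')
    (h : majcode w = majcode w') : w = w' := by
  have key : ∀ k ≤ n, w.filter (· ≤ k) = w'.filter (· ≤ k) := by
    intro k hk
    induction k with
    | zero => rw [filter_le_zero hw, filter_le_zero hw']
    | succ k ih =>
      have hkn : k < n := by omega
      have ihk := ih (by omega)
      obtain ⟨p, hp, he⟩ := chain_insW hw hkn
      obtain ⟨p', hp', he'⟩ := chain_insW hw' hkn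
      have hmaj : maj (w.filter (· ≤ k+1)) = maj (w'.filter (· ≤ k+1)) := by
        have b1 := maj_chain_bounds hw hkn
        have b2 := maj_chain_bounds hw' hkn
        have e1 : (majcode w).getD k 0 = maj (w.filter (· ≤ k+1)) - maj (w.filter (· ≤ k)) :=
          majcode_getD (by rw [hw.length]; omega)
        have e2 : (majcode w').getD k 0 = maj (w'.filter (· ≤ k+1)) - maj (w'.filter (· ≤ k)) :=
          majcode_getD (by rw [hw'.length]; omega)
        rw [h, ihk] at e1
        rw [ihk] at b1
        omega
      rw [he, he', ← ihk] at hmaj ⊢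
      have hlen := (hw.filter_le (by omega : k ≤ n)).length
      have hpp : p = p' := by
        rcases lt_trichotomy p p' with hc | hc | hc
        · exact absurd hmaj (maj_insW_ne hc (by omega) filter_le_lt)
        · exact hc
        · exact absurd hmaj.symm (maj_insW_ne hc (by omega) filter_le_lt)
      rw [hpp]
  have := key n le_rfl
  rwa [hw.filter_all le_rfl, hw'.filter_all le_rfl] at this

lemma insW_perm {n : ℕ} {w' : List ℕ} (hw' : IsPermWord n w') {p : ℕ} (hp : p ≤ n) :
    IsPermWord (n+1) (insW w' p (n+1)) := by
  have h1 : (insW w' p (n+1)).Perm ((n+1) :: w') := by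
    rw [insW]
    have := List.perm_middle (a := n+1) (l₁ := w'.take p) (l₂ := w'.drop p)
    simpa [List.take_append_drop] using this
  apply h1.trans
  have h2 : ((n+1) :: w').Perm ((n+1) :: List.range' 1 n) := (hw'.cons _)
  apply h2.trans
  have h3 : List.range' 1 (n+1) = List.range' 1 n ++ [n+1] := by
    rw [List.range'_concat]; congr 1; simp; omega
  rw [h3]
  simpa using (List.perm_middle (a := n+1) (l₁ := List.range' 1 n) (l₂ := [])).symm

lemma filter_insW_high {w' : List ℕ} {p M j : ℕ} (hM : ¬ (M ≤ j)) :
    (insW w' p M).filter (· ≤ j) = w'.filter (· ≤ j) := by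
  rw [insW, List.filter_append, List.filter_cons_of_neg (by simpa using hM),
    ← List.filter_append, List.take_append_drop]

lemma majcode_insW {n : ℕ} {w' : List ℕ} (hw' : IsPermWord n w') {p : ℕ} (hp : p ≤ n) :
    majcode (insW w' p (n+1)) = majcode w' ++ [maj (insW w' p (n+1)) - maj w'] := by
  set w := insW w' p (n+1) with hwdef
  have hperm : IsPermWord (n+1) w := insW_perm hw' hp
  have hlen : w.length = n + 1 := hperm.length
  have hlen' : w'.length = n := hw'.length
  rw [majcode, hlen, List.range_succ, List.map_append]
  congr 1
  · rw [majcode, hlen']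
    apply List.map_congr_left
    intro i hi
    rw [List.mem_range] at hi
    rw [filter_insW_high (by omega), filter_insW_high (by omega)]
  · simp only [List.map_cons, List.map_nil]
    congr 2
    · rw [hperm.filter_all le_rfl]
    · rw [filter_insW_high (j := n) (by omega), hw'.filter_all le_rfl]

lemma subexcedent_append {e : List ℕ} {a : ℕ} (h : Subexcedent (e ++ [a])) :
    Subexcedent e ∧ a ≤ e.length := by
  constructor
  · intro i hi
    have := h i (by simp; omega)
    rwa [List.getD_append _ _ _ _ hi] at this
  · have := h e.length (by simp)
    rwa [List.getD_append_right _ _ _ _ le_rfl, Nat.sub_self] at this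

lemma majcode_surj : ∀ (e : List ℕ), Subexcedent e →
    ∃ w, IsPermWord e.length w ∧ majcode w = e := by
  intro e
  induction e using List.reverseRecOn with
  | nil =>
    intro _
    exact ⟨[], by simp [IsPermWord], by simp [majcode]⟩
  | append_singleton e a ih =>
    intro hsub
    obtain ⟨hse, ha⟩ := subexcedent_append hsub
    obtain ⟨w', hw', hmc⟩ := ih hse
    set n := e.length with hn
    have hlen' : w'.length = n := hw'.length
    have hMlt : ∀ x ∈ w', x < n + 1 := by
      intro x hx; have := hw'.mem_iff.mp hx; omega
    obtain ⟨p, hp, hpe⟩ := maj_insW_surj hMlt (k := a) (by omega)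
    refine ⟨insW w' p (n+1), ?_, ?_⟩
    · have := insW_perm hw' (p := p) (by omega)
      simpa using this
    · rw [majcode_insW hw' (by omega), hmc, hpe]
      congr 2
      omega

def cW (n : ℕ) (w : List ℕ) : List ℕ := w.map (fun x => n + 1 - x)

lemma getD_mem {v : List ℕ} {i : ℕ} (hi : i < v.length) : v.getD i 0 ∈ v := by
  rw [List.getD_eq_getElem _ _ hi]; exact List.getElem_mem _

lemma ligne_map_compl {v : List ℕ} {m : ℕ} (hnd : v.Nodup) (hmem : ∀ x ∈ v, 1 ≤ x ∧ x ≤ m) :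
    ligne (v.map (fun x => m + 1 - x)) = Finset.Icc 1 (v.length - 1) \ ligne v := by
  ext i
  simp only [mem_ligne, List.length_map, Finset.mem_sdiff, Finset.mem_Icc]
  by_cases hb : 1 ≤ i ∧ i ≤ v.length - 1
  · obtain ⟨h1, h2⟩ := hb
    have hi1 : i - 1 < v.length := by omega
    have hi : i < v.length := by omega
    have e1 : (v.map (fun x => m + 1 - x)).getD (i-1) 0 = m + 1 - v.getD (i-1) 0 := by
      rw [List.getD_eq_getElem _ _ (by rw [List.length_map]; omega),
        List.getD_eq_getElem _ _ hi1, List.getElem_map]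
    have e2 : (v.map (fun x => m + 1 - x)).getD i 0 = m + 1 - v.getD i 0 := by
      rw [List.getD_eq_getElem _ _ (by rw [List.length_map]; omega),
        List.getD_eq_getElem _ _ hi, List.getElem_map]
    have ha := hmem _ (getD_mem hi1)
    have hb' := hmem _ (getD_mem hi)
    have hne : v.getD (i-1) 0 ≠ v.getD i 0 := by
      rw [List.getD_eq_getElem _ _ hi1, List.getD_eq_getElem _ _ hi]
      intro hc
      have := (List.Nodup.getElem_inj_iff hnd).mp hc
      omega
    rw [e1, e2]
    omega
  · constructor
    · rintro ⟨h1, h2, _⟩; exact absurd ⟨h1, h2⟩ hb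
    · rintro ⟨h1, _⟩; exact absurd h1 hb

lemma maj_map_compl {v : List ℕ} {m : ℕ} (hnd : v.Nodup) (hmem : ∀ x ∈ v, 1 ≤ x ∧ x ≤ m) :
    maj (v.map (fun x => m + 1 - x)) + maj v = ∑ i ∈ Finset.Icc 1 (v.length - 1), i := by
  rw [show maj (v.map (fun x => m + 1 - x)) = ∑ i ∈ ligne (v.map (fun x => m+1-x)), i from rfl,
    ligne_map_compl hnd hmem]
  rw [show maj v = ∑ i ∈ ligne v, i from rfl]
  exact Finset.sum_sdiff (ligne_subset v)

lemma cW_isPermWord {n : ℕ} {w : List ℕ} (h : IsPermWord n w) : IsPermWord n (cW n w) := by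
  have h1 : (cW n w).Perm ((List.range' 1 n).map (fun x => n + 1 - x)) := h.map _
  have h2 : (List.range' 1 n).map (fun x => n + 1 - x) = (List.range' 1 n).reverse := by
    apply List.ext_getElem
    · simp
    · intro i hi1 hi2
      simp only [List.length_map, List.length_range'] at hi1
      rw [List.getElem_map, List.getElem_reverse, List.getElem_range', List.getElem_range']
      simp only [List.length_range']
      omega
  rw [h2] at h1
  exact h1.trans (List.reverse_perm _)

lemma cW_cW {n : ℕ} {w : List ℕ} (h : IsPermWord n w) : cW n (cW n w) = w := by
  rw [cW, cW, List.map_map]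
  apply List.map_congr_left ?_ |>.trans (List.map_id w)
  intro x hx
  have := h.mem_iff.mp hx
  simp only [Function.comp_apply, id_eq]
  omega

lemma ligne_cW {n : ℕ} {w : List ℕ} (h : IsPermWord n w) :
    ligne (cW n w) = Finset.Icc 1 (n - 1) \ ligne w := by
  rw [cW, ligne_map_compl h.nodup (fun x hx => h.mem_iff.mp hx), h.length]

lemma cW_filter {n : ℕ} {w : List ℕ} (h : IsPermWord n w) {k : ℕ} (hk : 1 ≤ k) :
    (cW n w).filter (· ≤ n + 1 - k) = (w.filter (fun x => k ≤ x)).map (fun x => n + 1 - x) := by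
  rw [cW, List.filter_map]
  congr 1
  apply List.filter_congr
  intro x hx
  have := h.mem_iff.mp hx
  simp only [Function.comp_apply, decide_eq_decide]
  omega

lemma maj_cW_filter {n : ℕ} {w : List ℕ} (h : IsPermWord n w) {k : ℕ} (hk : 1 ≤ k) :
    maj ((cW n w).filter (· ≤ n + 1 - k)) + maj (w.filter (fun x => k ≤ x))
      = ∑ i ∈ Finset.Icc 1 ((w.filter (fun x => k ≤ x)).length - 1), i := by
  rw [cW_filter h hk]
  exact maj_map_compl (h.nodup.filter _)
    (fun x hx => h.mem_iff.mp (List.mem_of_mem_filter hx))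

lemma filter_ge_length {n : ℕ} {w : List ℕ} (h : IsPermWord n w) {k : ℕ} (hk : 1 ≤ k) :
    (w.filter (fun x => k ≤ x)).length = n + 1 - k := by
  have hperm := h.filter (fun x => k ≤ x)
  rw [hperm.length_eq]
  rcases le_or_gt k n with hkn | hkn
  · have hsplit : List.range' 1 (k-1) ++ List.range' k (n-(k-1)) = List.range' 1 n := by
      have h2 := List.range'_append (s := 1) (m := k-1) (n := n-(k-1)) (step := 1)
      rw [one_mul] at h2
      rw [show 1 + (k-1) = k by omega] at h2
      rw [h2]; congr 1; omega
    rw [← hsplit, List.filter_append,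
      List.filter_eq_nil_iff.mpr (by intro a ha; rw [List.mem_range'_1] at ha; simp; omega),
      List.filter_eq_self.mpr (by intro a ha; rw [List.mem_range'_1] at ha; simp; omega)]
    simp only [List.nil_append, List.length_range']
    omega
  · rw [List.filter_eq_nil_iff.mpr (by intro a ha; rw [List.mem_range'_1] at ha; simp; omega)]
    simp; omega

lemma mc_length (w : List ℕ) : (mc w).length = w.length := by simp [mc]

lemma mc_getD {w : List ℕ} {i : ℕ} (hi : i < w.length) :
    (mc w).getD i 0 = maj (w.filter (fun x => i+1 ≤ x)) - maj (w.filter (fun x => i+2 ≤ x)) := by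
  rw [List.getD_eq_getElem _ _ (by rw [mc_length]; exact hi)]
  simp [mc]

lemma mc_majcode_cW {n : ℕ} {w : List ℕ} (h : IsPermWord n w) {i : ℕ} (hi : i < n) :
    (mc w).getD i 0 + (majcode (cW n w)).getD (n-1-i) 0 = n-1-i := by
  have hu : IsPermWord n (cW n w) := cW_isPermWord h
  have E1 := maj_cW_filter h (k := i+1) (by omega)
  have E2 := maj_cW_filter h (k := i+2) (by omega)
  rw [filter_ge_length h (by omega)] at E1
  rw [filter_ge_length h (by omega)] at E2
  rw [show n + 1 - (i+1) = n - i by omega] at E1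
  rw [show n + 1 - (i+2) = n - i - 1 by omega] at E2
  have hmcode : (majcode (cW n w)).getD (n-1-i) 0
      = maj ((cW n w).filter (· ≤ n-i)) - maj ((cW n w).filter (· ≤ n-i-1)) := by
    rw [majcode_getD (by rw [hu.length]; omega)]
    rw [show n-1-i+1 = n-i by omega, show n-1-i = n-i-1 by omega]
  have hbounds := maj_chain_bounds hu (k := n-i-1) (by omega)
  rw [show n-i-1+1 = n-i by omega] at hbounds
  have hmc := mc_getD (show i < w.length by rw [h.length]; exact hi)
  have hsumgen : ∀ m : ℕ, ∑ j ∈ Finset.Icc 1 m, j = (∑ j ∈ Finset.Icc 1 (m-1), j) + m := by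
    intro m
    cases m with
    | zero => simp
    | succ m =>
      rw [Finset.sum_Icc_succ_top (by omega)]
      simp
  have hsum := hsumgen (n-i-1)
  omega

lemma list_eq_of_getD {l₁ l₂ : List ℕ} (h : l₁.length = l₂.length)
    (h2 : ∀ i < l₁.length, l₁.getD i 0 = l₂.getD i 0) : l₁ = l₂ := by
  apply List.ext_getElem h
  intro i hi1 hi2
  have := h2 i hi1
  rwa [List.getD_eq_getElem _ _ hi1, List.getD_eq_getElem _ _ hi2] at this

lemma deltaC_length (v : List ℕ) : (deltaC v).length = v.length := by simp [deltaC]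

lemma deltaC_getD {v : List ℕ} {i : ℕ} (hi : i < v.length) :
    (deltaC v).getD i 0 = i - v.getD i 0 := by
  rw [List.getD_eq_getElem _ _ (by rw [deltaC_length]; exact hi)]
  simp [deltaC]

lemma reverse_getD {v : List ℕ} {j : ℕ} (hj : j < v.length) :
    v.reverse.getD j 0 = v.getD (v.length - 1 - j) 0 := by
  rw [List.getD_eq_getElem _ _ (by simpa using hj),
    List.getD_eq_getElem _ _ (by omega), List.getElem_reverse]

theorem stmt16 (d : List ℕ) (hd : Subdiagonal d) :
    El d = Finset.Icc 1 (d.length - 1) \ Eul (deltaC d.reverse) := by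
  classical
  set n := d.length with hn
  set e := deltaC d.reverse with he
  have hel : e.length = n := by rw [he, deltaC_length, List.length_reverse]
  have hed : ∀ j < n, e.getD j 0 = j - d.getD (n-1-j) 0 := by
    intro j hj
    rw [he, deltaC_getD (by rw [List.length_reverse]; exact hj),
      reverse_getD (by exact hj)]
  have hsubd : ∀ i < n, d.getD i 0 ≤ n - 1 - i := by
    intro i hi
    have := hd i hi
    omega
  have hse : Subexcedent e := by
    intro j hj
    rw [hel] at hj
    rw [hed j hj]
    omega
  obtain ⟨u, hu, hmu⟩ := majcode_surj e hse
  rw [hel] at hu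
  have hwp : IsPermWord n (cW n u) := cW_isPermWord hu
  have hcwu : cW n (cW n u) = u := cW_cW hu
  have hmcw : mc (cW n u) = d := by
    apply list_eq_of_getD
    · rw [mc_length, hwp.length]
    · intro i hilen
      have hi : i < n := by rwa [mc_length, hwp.length] at hilen
      have hid := mc_majcode_cW hwp hi
      rw [hcwu, hmu] at hid
      rw [hed (n-1-i) (by omega)] at hid
      have h2 := hsubd i hi
      rw [show n-1-(n-1-i) = i by omega] at hid
      omega
  have hExEl : ∃ v, IsPermWord d.length v ∧ mc v = d := ⟨cW n u, hwp, hmcw⟩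
  unfold El
  rw [dif_pos hExEl]
  obtain ⟨hw0p, hw0mc⟩ := hExEl.choose_spec
  set w₀ := hExEl.choose with hw₀
  rw [← hn] at hw0p
  -- majcode of the complement of w₀ equals e
  have hkey : majcode (cW n w₀) = e := by
    have hcwp : IsPermWord n (cW n w₀) := cW_isPermWord hw0p
    apply list_eq_of_getD
    · rw [majcode_length, hcwp.length, hel]
    · intro j hjlen
      have hj : j < n := by rwa [majcode_length, hcwp.length] at hjlen
      have hid := mc_majcode_cW hw0p (show n-1-j < n by omega)
      rw [show n-1-(n-1-j) = j by omega] at hid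
      rw [hw0mc] at hid
      rw [hed j hj]
      have h2 := hsubd (n-1-j) (by omega)
      omega
  have hExEul : ∃ v, IsPermWord e.length v ∧ majcode v = e :=
    ⟨cW n w₀, by rw [hel]; exact cW_isPermWord hw0p, hkey⟩
  unfold Eul
  rw [dif_pos hExEul]
  obtain ⟨hu0p, hu0mc⟩ := hExEul.choose_spec
  set u₀ := hExEul.choose with hu₀
  rw [hel] at hu0p
  have hu0eq : u₀ = cW n w₀ :=
    majcode_inj hu0p (cW_isPermWord hw0p) (by rw [hu0mc, hkey])
  rw [hu0eq, ligne_cW hw0p]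
  have hsub : ligne w₀ ⊆ Finset.Icc 1 (n - 1) := by
    have := ligne_subset w₀
    rwa [hw0p.length] at this
  rw [Finset.sdiff_sdiff_eq_self hsub]
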